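/- For nonnegative integers a_1, …, a_n with n ≥ 4, setting c_j = e_j(a_1,…,a_n), the identity ∑_{i=1}^n C(a_i+4, 4) = (1/24)·[c_1^4 + 10c_1^3 − 4c_1^2c_2 + 35c_1^2 − 30c_1c_2 + 4c_1c_3 + 2c_2^2 + 50c_1 − 70c_2 + 30c_3 − 4c_4] + n holds. -/

import Mathlib

def esymm {R : Type*} [CommRing R] (n j : ℕ) (x : ℕ → R) : R :=
  ∑ s ∈ Finset.powersetCard j (Finset.range n), ∏ i ∈ s, x i

lemma esymm_zero {R : Type*} [CommRing R] (n : ℕ) (x : ℕ → R) : esymm n 0 x = 1 := by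
  simp [esymm]

lemma esymm_nil {R : Type*} [CommRing R] (j : ℕ) (x : ℕ → R) :
    esymm 0 (j + 1) x = 0 := by
  simp [esymm]
  rw [Finset.powersetCard_eq_empty.2 (by simp)]
  simp

lemma esymm_succ {R : Type*} [CommRing R] (n j : ℕ) (x : ℕ → R) :
    esymm (n + 1) (j + 1) x = esymm n (j + 1) x + x n * esymm n j x := by
  unfold esymm
  rw [Finset.range_add_one, Finset.powersetCard_succ_insert (Finset.notMem_range_self)]
  rw [Finset.sum_union]
  · congr 1
    rw [Finset.sum_image]
    · rw [Finset.mul_sum]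
      apply Finset.sum_congr rfl
      intro s hs
      rw [Finset.mem_powersetCard] at hs
      rw [Finset.prod_insert (fun h => Finset.notMem_range_self (hs.1 h))]
    · intro s hs t ht hst
      rw [Finset.mem_coe, Finset.mem_powersetCard] at hs ht
      have hns : n ∉ s := fun h => Finset.notMem_range_self (hs.1 h)
      have hnt : n ∉ t := fun h => Finset.notMem_range_self (ht.1 h)
      have := congrArg (fun u : Finset ℕ => u.erase n) hst
      simpa [Finset.erase_insert, hns, hnt] using this
  · rw [Finset.disjoint_left]
    intro s hs hs'
    rw [Finset.mem_powersetCard] at hs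
    rw [Finset.mem_image] at hs'
    obtain ⟨t, ht, rfl⟩ := hs'
    exact Finset.notMem_range_self (hs.1 (Finset.mem_insert_self n t))

lemma esymm_succ' {R : Type*} [CommRing R] (n : ℕ) (x : ℕ → R) :
    esymm (n + 1) 1 x = esymm n 1 x + x n ∧
    esymm (n + 1) 2 x = esymm n 2 x + x n * esymm n 1 x ∧
    esymm (n + 1) 3 x = esymm n 3 x + x n * esymm n 2 x ∧
    esymm (n + 1) 4 x = esymm n 4 x + x n * esymm n 3 x := by
  refine ⟨?_, esymm_succ n 1 x, esymm_succ n 2 x, esymm_succ n 3 x⟩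
  rw [esymm_succ n 0 x, esymm_zero, mul_one]

lemma psum1 {R : Type*} [CommRing R] (n : ℕ) (x : ℕ → R) :
    ∑ i ∈ Finset.range n, x i = esymm n 1 x := by
  induction n with
  | zero => simp [esymm_nil]
  | succ n ih =>
    obtain ⟨h1, h2, h3, h4⟩ := esymm_succ' n x
    rw [Finset.sum_range_succ, ih, h1]

lemma psum2 {R : Type*} [CommRing R] (n : ℕ) (x : ℕ → R) :
    ∑ i ∈ Finset.range n, x i ^ 2 = esymm n 1 x ^ 2 - 2 * esymm n 2 x := by
  induction n with
  | zero => simp [esymm_nil]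
  | succ n ih =>
    obtain ⟨h1, h2, h3, h4⟩ := esymm_succ' n x
    rw [Finset.sum_range_succ, ih, h1, h2]; ring

lemma psum3 {R : Type*} [CommRing R] (n : ℕ) (x : ℕ → R) :
    ∑ i ∈ Finset.range n, x i ^ 3 =
      esymm n 1 x ^ 3 - 3 * esymm n 1 x * esymm n 2 x + 3 * esymm n 3 x := by
  induction n with
  | zero => simp [esymm_nil]
  | succ n ih =>
    obtain ⟨h1, h2, h3, h4⟩ := esymm_succ' n x
    rw [Finset.sum_range_succ, ih, h1, h2, h3]; ring

lemma psum4 {R : Type*} [CommRing R] (n : ℕ) (x : ℕ → R) :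
    ∑ i ∈ Finset.range n, x i ^ 4 =
      esymm n 1 x ^ 4 - 4 * esymm n 1 x ^ 2 * esymm n 2 x + 2 * esymm n 2 x ^ 2 +
        4 * esymm n 1 x * esymm n 3 x - 4 * esymm n 4 x := by
  induction n with
  | zero => simp [esymm_nil]
  | succ n ih =>
    obtain ⟨h1, h2, h3, h4⟩ := esymm_succ' n x
    rw [Finset.sum_range_succ, ih, h1, h2, h3, h4]; ring

lemma choose_four_cast (a : ℕ) :
    ((a + 4).choose 4 : ℚ) =
      ((a : ℚ) ^ 4 + 10 * a ^ 3 + 35 * a ^ 2 + 50 * a + 24) / 24 := by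
  have h : 24 * (a + 4).choose 4 = (a + 1) * (a + 2) * (a + 3) * (a + 4) := by
    have := Nat.descFactorial_eq_factorial_mul_choose (a + 4) 4
    simp [Nat.descFactorial, Nat.factorial] at this
    rw [← this]; ring
  have h' : (24 : ℚ) * (a + 4).choose 4 = ((a : ℚ) + 1) * (a + 2) * (a + 3) * (a + 4) := by
    exact_mod_cast congrArg (Nat.cast : ℕ → ℚ) h
  field_simp
  linarith [h']

theorem euler_char_P4 (n : ℕ) (hn : 4 ≤ n) (a : ℕ → ℕ) (c : ℕ → ℚ)
    (hc : ∀ j, c j = esymm n j (fun i => (a i : ℚ))) :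
    (∑ i ∈ Finset.range n, ((a i + 4).choose 4 : ℚ)) =
      (1 / 24 : ℚ) *
        (c 1 ^ 4 + 10 * c 1 ^ 3 - 4 * c 1 ^ 2 * c 2 + 35 * c 1 ^ 2 - 30 * c 1 * c 2 +
          4 * c 1 * c 3 + 2 * c 2 ^ 2 + 50 * c 1 - 70 * c 2 + 30 * c 3 - 4 * c 4) + n := by
  have key : (∑ i ∈ Finset.range n, ((a i + 4).choose 4 : ℚ)) =
      (1 / 24 : ℚ) * ((∑ i ∈ Finset.range n, (a i : ℚ) ^ 4) +
        10 * (∑ i ∈ Finset.range n, (a i : ℚ) ^ 3) +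
        35 * (∑ i ∈ Finset.range n, (a i : ℚ) ^ 2) +
        50 * (∑ i ∈ Finset.range n, (a i : ℚ))) + n := by
    rw [Finset.sum_congr rfl (fun i _ => choose_four_cast (a i))]
    rw [← Finset.sum_div]
    simp only [Finset.sum_add_distrib, ← Finset.mul_sum, Finset.sum_const,
      Finset.card_range, nsmul_eq_mul]
    ring
  rw [key, hc 1, hc 2, hc 3, hc 4,
    psum4 n (fun i => (a i : ℚ)), psum3 n (fun i => (a i : ℚ)),
    psum2 n (fun i => (a i : ℚ)), psum1 n (fun i => (a i : ℚ))]
  ring
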